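/- In the stopping-cube setting, for every a ∈ ℤ and every S ∈ 𝒮^a: (i) Σ_{S' ∈ 𝒮^a, S' ⊆ S} |S'| ≤ (4/3)·|S|, and (ii) ‖ Σ_{S' ∈ 𝒮^a, S' ⊊ S} 1_{S'} ‖_{L²(ℝ^N)} ≤ |S|^{1/2}. -/

import Mathlib

open MeasureTheory
open scoped ENNReal

noncomputable section

/-- Points of `ℝ^N` with the `ℓ^∞` (sup) metric, as `Fin N → ℝ`. -/
abbrev Euc (N : ℕ) := Fin N → ℝ

/-- The axis-parallel half-open cube with lower-left corner `c` and sidelength `l`. -/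
def cube {N : ℕ} (c : Euc N) (l : ℝ) : Set (Euc N) :=
  {x | ∀ i, c i ≤ x i ∧ x i < c i + l}

/-- Binary sequences `β = (β_j)_{j ∈ ℤ}` with `β_j ∈ {0,1}^N`, parametrising the
translated dyadic systems. -/
abbrev BSeq (N : ℕ) := ℤ → Fin N → Bool

/-- The translation `Σ_{j > k} 2^{-j} β_j` applied to dyadic cubes of sidelength `2^{-k}`. -/
def betaShift {N : ℕ} (β : BSeq N) (k : ℤ) : Euc N :=
  fun i => ∑' j : {j : ℤ // k < j}, (2 : ℝ) ^ (-(j : ℤ)) * (if β j i then 1 else 0)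

/-- The cube `I ∔ β` of the translated dyadic system `𝒟^β`, where `I ∈ 𝒟⁰` has
sidelength `2^{-k}` and lower-left corner `2^{-k}·p`, `p ∈ ℤ^N`. -/
def dyCube {N : ℕ} (β : BSeq N) (k : ℤ) (p : Fin N → ℤ) : Set (Euc N) :=
  cube (fun i => (p i : ℝ) * (2 : ℝ) ^ (-k) + betaShift β k i) ((2 : ℝ) ^ (-k))

/-- The data of a dyadic shift: for each dyadic cube (indexed by scale `k` and
position `p`) a kernel `a_K : ℝ^N × ℝ^N → ℝ`. -/
abbrev ShiftKernel (N : ℕ) := ℤ → (Fin N → ℤ) → Euc N → Euc N → ℝ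

/-- `a` is (the kernel family of) a dyadic shift with parameters `(u,v)` and constant `A`
on the dyadic system `𝒟^β`: each `a_K` is measurable, supported on `K × K`, bounded by `A`,
constant in `x` on dyadic cubes of sidelength `2^{-v-1}ℓ(K)` and constant in `y` on dyadic
cubes of sidelength `2^{-u-1}ℓ(K)`. -/
structure IsShift {N : ℕ} (β : BSeq N) (u v : ℕ) (A : ℝ) (a : ShiftKernel N) : Prop where
  meas : ∀ k p, Measurable (fun xy : Euc N × Euc N => a k p xy.1 xy.2)
  suppK : ∀ k p x y, a k p x y ≠ 0 → x ∈ dyCube β k p ∧ y ∈ dyCube β k p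
  bdd : ∀ k p x y, |a k p x y| ≤ A
  constX : ∀ k p p' x x' y, x ∈ dyCube β (k + v + 1) p' → x' ∈ dyCube β (k + v + 1) p' →
    a k p x y = a k p x' y
  constY : ∀ k p p' x y y', y ∈ dyCube β (k + u + 1) p' → y' ∈ dyCube β (k + u + 1) p' →
    a k p x y = a k p x y'

/-- The shift is finite: only finitely many of the kernels `a_K` are nonzero. -/
def ShiftFinite {N : ℕ} (a : ShiftKernel N) : Prop :=
  {kp : ℤ × (Fin N → ℤ) | ∃ x y, a kp.1 kp.2 x y ≠ 0}.Finite

/-- The dyadic shift operator `𝕊f(x) = Σ_K |K|⁻¹ ∫_K a_K(x,y) f(y) dy`. -/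
def shiftOp {N : ℕ} (β : BSeq N) (a : ShiftKernel N) (f : Euc N → ℝ) (x : Euc N) : ℝ :=
  ∑' kp : ℤ × (Fin N → ℤ),
    (((2 : ℝ) ^ (-kp.1)) ^ N)⁻¹ * ∫ y in dyCube β kp.1 kp.2, a kp.1 kp.2 x y * f y

/-- The shift restricted to a subcollection `𝒞` of dyadic cubes:
`𝕊_𝒞 f(x) = Σ_{K ∈ 𝒞} |K|⁻¹ ∫_K a_K(x,y) f(y) dy`. -/
def shiftOpOn {N : ℕ} (β : BSeq N) (C : Set (ℤ × (Fin N → ℤ))) (a : ShiftKernel N)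
    (f : Euc N → ℝ) (x : Euc N) : ℝ :=
  ∑' kp : C,
    (((2 : ℝ) ^ (-(kp : ℤ × (Fin N → ℤ)).1)) ^ N)⁻¹ *
      ∫ y in dyCube β (kp : ℤ × (Fin N → ℤ)).1 (kp : ℤ × (Fin N → ℤ)).2,
        a (kp : ℤ × (Fin N → ℤ)).1 (kp : ℤ × (Fin N → ℤ)).2 x y * f y

/-- The shift is good with goodness parameter `γ`: nonvanishing of `a_K(x,y)` forces
`dist(x, ∂K) ≥ 2^{-1-vγ} ℓ(K)` and `dist(y, ∂K) ≥ 2^{-1-uγ} ℓ(K)` (`ℓ^∞` distances). -/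
def IsGoodShift {N : ℕ} (β : BSeq N) (γ : ℝ) (u v : ℕ) (a : ShiftKernel N) : Prop :=
  ∀ k p x y, a k p x y ≠ 0 →
    (2 : ℝ) ^ (-1 - (v : ℝ) * γ) * (2 : ℝ) ^ (-k) ≤
        Metric.infDist x (frontier (dyCube β k p)) ∧
      (2 : ℝ) ^ (-1 - (u : ℝ) * γ) * (2 : ℝ) ^ (-k) ≤
        Metric.infDist y (frontier (dyCube β k p))

/-- The shift is bounded on (unweighted) `L²` with norm at most `A`. -/
def ShiftL2Bounded {N : ℕ} (β : BSeq N) (A : ℝ) (a : ShiftKernel N) : Prop :=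
  ∀ h : Euc N → ℝ, MemLp h 2 volume →
    ∫⁻ x, ENNReal.ofReal ((shiftOp β a h x) ^ 2) ≤
      ENNReal.ofReal (A ^ 2) * ∫⁻ x, ENNReal.ofReal ((h x) ^ 2)

/-- The set of all local `A₂` products `(⨍_Q w)(⨍_Q w⁻¹)` over axis-parallel cubes `Q`. -/
def A2set {N : ℕ} (w : Euc N → ℝ) : Set ℝ :=
  {t | ∃ (c : Euc N) (l : ℝ), 0 < l ∧
    t = (⨍ x in cube c l, w x) * (⨍ x in cube c l, (w x)⁻¹)}

/-- The `A₂` characteristic `[w]_{A₂} = sup_Q (⨍_Q w)(⨍_Q w⁻¹)`. -/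
def A2const {N : ℕ} (w : Euc N → ℝ) : ℝ := sSup (A2set w)

/-- `w` is an `A₂` weight: positive, with `w` and `w⁻¹` locally integrable, and with
finite `A₂` characteristic (the set of local `A₂` products is bounded above). -/
structure IsA2Weight {N : ℕ} (w : Euc N → ℝ) : Prop where
  meas : Measurable w
  pos : ∀ x, 0 < w x
  locInt : LocallyIntegrable w volume
  locIntInv : LocallyIntegrable (fun x => (w x)⁻¹) volume
  bddA2 : BddAbove (A2set w)

/-- The inner part `K̂` of a dyadic cube: points at `ℓ^∞`-distance at least
`2^{-max(u,v)γ} ℓ(K)` from `∂K`. -/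
def hatCube {N : ℕ} (β : BSeq N) (u v : ℕ) (γ : ℝ) (k : ℤ) (p : Fin N → ℤ) :
    Set (Euc N) :=
  {x ∈ dyCube β k p |
    (2:ℝ) ^ (-(max u v : ℝ) * γ) * (2:ℝ) ^ (-k) ≤
      Metric.infDist x (frontier (dyCube β k p))}

/-- The collection `𝒦`: dyadic cubes `K` with `K̂ ∩ Q ≠ ∅` and `ℓ(K) < ℓ(Q)`, whose
sidelengths lie in the residue class `ρ` of `log₂ ℓ(K) mod (v+1)`. Here `Q` is the cube
with corner `Qc` and sidelength `Ql`. -/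
def calK {N : ℕ} (β : BSeq N) (u v : ℕ) (γ : ℝ) (Qc : Euc N) (Ql : ℝ) (ρ : ℤ) :
    Set (ℤ × (Fin N → ℤ)) :=
  {kp | (hatCube β u v γ kp.1 kp.2 ∩ cube Qc Ql).Nonempty ∧ (2:ℝ) ^ (-kp.1) < Ql ∧
    ((v : ℤ) + 1) ∣ (kp.1 - ρ)}

/-- The ratio `w(K ∩ Q)/|K|` for the dyadic cube `K` indexed by `kp`. -/
def wRatio {N : ℕ} (β : BSeq N) (w : Euc N → ℝ) (Qc : Euc N) (Ql : ℝ)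
    (kp : ℤ × (Fin N → ℤ)) : ℝ :=
  (∫ x in dyCube β kp.1 kp.2 ∩ cube Qc Ql, w x) / ((2:ℝ) ^ (-kp.1)) ^ N

/-- The ratio `σ(K)/|K|`, `σ := w⁻¹`, for the dyadic cube `K` indexed by `kp`. -/
def sigRatio {N : ℕ} (β : BSeq N) (w : Euc N → ℝ) (kp : ℤ × (Fin N → ℤ)) : ℝ :=
  (∫ x in dyCube β kp.1 kp.2, (w x)⁻¹) / ((2:ℝ) ^ (-kp.1)) ^ N

/-- The collection `𝒦^a`: cubes of `𝒦` with local `A₂` product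
`(w(K∩Q)/|K|)(σ(K)/|K|)` in `(2^a, 2^{a+1}]`. -/
def calKa {N : ℕ} (β : BSeq N) (u v : ℕ) (γ : ℝ) (w : Euc N → ℝ) (Qc : Euc N) (Ql : ℝ)
    (ρ : ℤ) (a : ℤ) : Set (ℤ × (Fin N → ℤ)) :=
  {kp ∈ calK β u v γ Qc Ql ρ |
    (2:ℝ) ^ a < wRatio β w Qc Ql kp * sigRatio β w kp ∧
      wRatio β w Qc Ql kp * sigRatio β w kp ≤ (2:ℝ) ^ (a + 1)}

/-- The generations `𝒮^a_n` of stopping cubes: `𝒮^a_0` are the maximal cubes of `𝒦^a`,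
and `𝒮^a_{n+1}` the maximal `K ∈ 𝒦^a` with `w(K∩Q)/|K| > 4·w(S∩Q)/|S|` for some
`S ∈ 𝒮^a_n` strictly containing `K`. -/
def stopFam {N : ℕ} (β : BSeq N) (u v : ℕ) (γ : ℝ) (w : Euc N → ℝ) (Qc : Euc N)
    (Ql : ℝ) (ρ : ℤ) (a : ℤ) : ℕ → Set (ℤ × (Fin N → ℤ))
  | 0 =>
    {kp ∈ calKa β u v γ w Qc Ql ρ a |
      ∀ kp' ∈ calKa β u v γ w Qc Ql ρ a,
        dyCube β kp.1 kp.2 ⊆ dyCube β kp'.1 kp'.2 →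
          dyCube β kp'.1 kp'.2 = dyCube β kp.1 kp.2}
  | (n + 1) =>
    {kp | (kp ∈ calKa β u v γ w Qc Ql ρ a ∧
        ∃ s ∈ stopFam β u v γ w Qc Ql ρ a n,
          dyCube β kp.1 kp.2 ⊂ dyCube β s.1 s.2 ∧
            4 * wRatio β w Qc Ql s < wRatio β w Qc Ql kp) ∧
      ∀ kp', (kp' ∈ calKa β u v γ w Qc Ql ρ a ∧
          ∃ s ∈ stopFam β u v γ w Qc Ql ρ a n,
            dyCube β kp'.1 kp'.2 ⊂ dyCube β s.1 s.2 ∧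
              4 * wRatio β w Qc Ql s < wRatio β w Qc Ql kp') →
        dyCube β kp.1 kp.2 ⊆ dyCube β kp'.1 kp'.2 →
          dyCube β kp'.1 kp'.2 = dyCube β kp.1 kp.2}

/-- The full stopping family `𝒮^a = ⋃_n 𝒮^a_n`. -/
def stopSet {N : ℕ} (β : BSeq N) (u v : ℕ) (γ : ℝ) (w : Euc N → ℝ) (Qc : Euc N)
    (Ql : ℝ) (ρ : ℤ) (a : ℤ) : Set (ℤ × (Fin N → ℤ)) :=
  ⋃ n : ℕ, stopFam β u v γ w Qc Ql ρ a n

/-- The collection `𝒦^a(S)` of cubes of `𝒦^a` whose minimal stopping cube is `S`. -/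
def calKaS {N : ℕ} (β : BSeq N) (u v : ℕ) (γ : ℝ) (w : Euc N → ℝ) (Qc : Euc N)
    (Ql : ℝ) (ρ : ℤ) (a : ℤ) (s : ℤ × (Fin N → ℤ)) : Set (ℤ × (Fin N → ℤ)) :=
  {kp ∈ calKa β u v γ w Qc Ql ρ a |
    dyCube β kp.1 kp.2 ⊆ dyCube β s.1 s.2 ∧
      ∀ s' ∈ stopSet β u v γ w Qc Ql ρ a,
        dyCube β kp.1 kp.2 ⊆ dyCube β s'.1 s'.2 →
          dyCube β s.1 s.2 ⊆ dyCube β s'.1 s'.2}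

/-- The collection `𝒦^a_b(S)` of cubes `K ∈ 𝒦^a(S)` with
`2^{1-b} w(S∩Q)/|S| < w(K∩Q)/|K| ≤ 2^{2-b} w(S∩Q)/|S|`. -/
def calKaSb {N : ℕ} (β : BSeq N) (u v : ℕ) (γ : ℝ) (w : Euc N → ℝ) (Qc : Euc N)
    (Ql : ℝ) (ρ : ℤ) (a : ℤ) (s : ℤ × (Fin N → ℤ)) (b : ℕ) : Set (ℤ × (Fin N → ℤ)) :=
  {kp ∈ calKaS β u v γ w Qc Ql ρ a s |
    (2:ℝ) ^ (1 - (b : ℤ)) * wRatio β w Qc Ql s < wRatio β w Qc Ql kp ∧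
      wRatio β w Qc Ql kp ≤ (2:ℝ) ^ (2 - (b : ℤ)) * wRatio β w Qc Ql s}


namespace St16

open Set MeasureTheory

variable {N : ℕ}

abbrev Idx (N : ℕ) := ℤ × (Fin N → ℤ)

/-- The dyadic cube associated to an index pair. -/
def dc (β : BSeq N) (kp : Idx N) : Set (Euc N) := dyCube β kp.1 kp.2

lemma cube_eq_pi (c : Euc N) (l : ℝ) :
    cube c l = Set.pi Set.univ (fun i => Set.Ico (c i) (c i + l)) := by
  ext x; simp [cube, Set.mem_pi]

lemma measurableSet_cube (c : Euc N) (l : ℝ) : MeasurableSet (cube c l) := by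
  rw [cube_eq_pi]; exact MeasurableSet.univ_pi fun i => measurableSet_Ico

lemma volume_cube (c : Euc N) (l : ℝ) (hl : 0 ≤ l) :
    volume (cube c l) = ENNReal.ofReal (l ^ N) := by
  rw [cube_eq_pi, volume_pi_pi]
  simp only [Real.volume_Ico, add_sub_cancel_left]
  rw [Finset.prod_const, ← ENNReal.ofReal_pow hl, Finset.card_univ, Fintype.card_fin]

lemma measurableSet_dyCube (β : BSeq N) (k : ℤ) (p : Fin N → ℤ) :
    MeasurableSet (dyCube β k p) := measurableSet_cube _ _

lemma volume_dyCube (β : BSeq N) (k : ℤ) (p : Fin N → ℤ) :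
    volume (dyCube β k p) = ENNReal.ofReal (((2:ℝ) ^ (-k)) ^ N) :=
  volume_cube _ _ (by positivity)

lemma corner_mem_cube {c : Euc N} {l : ℝ} (hl : 0 < l) : c ∈ cube c l :=
  fun i => ⟨le_refl _, lt_add_of_pos_right _ hl⟩

lemma dyCube_nonempty (β : BSeq N) (k : ℤ) (p : Fin N → ℤ) :
    (dyCube β k p).Nonempty :=
  ⟨_, corner_mem_cube (by positivity)⟩

lemma cube_subset_closedBall (c : Euc N) {l : ℝ} (hl : 0 < l) :
    cube c l ⊆ Metric.closedBall c l := by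
  intro x hx
  rw [Metric.mem_closedBall, dist_pi_le_iff hl.le]
  intro i
  have h := hx i
  rw [Real.dist_eq, abs_le]
  constructor <;> linarith [h.1, h.2]

lemma isBounded_dyCube (β : BSeq N) (k : ℤ) (p : Fin N → ℤ) :
    Bornology.IsBounded (dyCube β k p) :=
  Metric.isBounded_closedBall.subset (cube_subset_closedBall _ (by positivity))

/-! ### betaShift arithmetic -/

def shiftEquiv (k : ℤ) : ℕ ≃ {j : ℤ // k < j} where
  toFun n := ⟨k + 1 + n, by omega⟩
  invFun j := (j.1 - (k + 1)).toNat
  left_inv n := by simp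
  right_inv j := by
    rcases j with ⟨j, hj⟩
    ext
    simp only
    omega

lemma betaShift_eq_tsum_nat (β : BSeq N) (k : ℤ) (i : Fin N) :
    betaShift β k i
      = ∑' n : ℕ, (2:ℝ) ^ (-(k + 1 + n : ℤ)) * (if β (k + 1 + n) i then 1 else 0) :=
  ((shiftEquiv k).tsum_eq (fun j : {j : ℤ // k < j} =>
    (2:ℝ) ^ (-(j : ℤ)) * (if β j i then 1 else 0))).symm

lemma summable_beta (β : BSeq N) (k : ℤ) (i : Fin N) :
    Summable (fun n : ℕ => (2:ℝ) ^ (-(k + 1 + n : ℤ)) * (if β (k + 1 + n) i then 1 else 0)) := by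
  refine Summable.of_nonneg_of_le (fun n => by positivity) (fun n => ?_)
    ((summable_geometric_of_lt_one (r := (2⁻¹:ℝ)) (by norm_num) (by norm_num)).mul_left ((2:ℝ) ^ (-(k + 1) : ℤ)))
  have he : (2:ℝ) ^ (-(k + 1 + n : ℤ)) = (2:ℝ) ^ (-(k + 1) : ℤ) * (2⁻¹ : ℝ) ^ n := by
    rw [show (-(k + 1 + n : ℤ)) = (-(k+1)) + (-(n:ℤ)) by ring, zpow_add₀ (two_ne_zero)]
    congr 1
    rw [zpow_neg, zpow_natCast, inv_pow]
  rw [he]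
  have h1 : (if β (k + 1 + n) i then (1:ℝ) else 0) ≤ 1 := by split <;> norm_num
  have h2 : (0:ℝ) < (2:ℝ) ^ (-(k + 1) : ℤ) * (2⁻¹ : ℝ) ^ n := by positivity
  nlinarith [h2]

lemma betaShift_step (β : BSeq N) (k : ℤ) (i : Fin N) :
    betaShift β k i
      = (2:ℝ) ^ (-(k + 1)) * (if β (k + 1) i then 1 else 0) + betaShift β (k + 1) i := by
  rw [betaShift_eq_tsum_nat β k i, Summable.tsum_eq_zero_add (summable_beta β k i)]
  congr 1
  · norm_num
  · rw [betaShift_eq_tsum_nat β (k+1) i]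
    apply tsum_congr
    intro n
    have : (k + 1 + ((n:ℤ) + 1)) = (k + 1) + 1 + n := by ring
    rw [show (k + 1 + ((n + 1 : ℕ) : ℤ)) = (k + 1) + 1 + n by push_cast; ring]

lemma betaShift_offset (β : BSeq N) (i : Fin N) (k : ℤ) (d : ℕ) :
    ∃ M : ℤ, betaShift β k i = betaShift β (k + d) i + (M : ℝ) * (2:ℝ) ^ (-(k + d)) := by
  induction d with
  | zero => exact ⟨0, by simp⟩
  | succ d ih =>
    obtain ⟨M, hM⟩ := ih
    refine ⟨(if β (k + d + 1) i then 1 else 0) + 2 * M, ?_⟩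
    have hstep := betaShift_step β (k + d) i
    have h2 : (2:ℝ) ^ (-(k + (d:ℤ))) = 2 * (2:ℝ) ^ (-(k + ((d:ℤ) + 1))) := by
      rw [show (-(k + ((d:ℤ) + 1))) = (-(k + (d:ℤ))) + (-1) by ring, zpow_add₀ (two_ne_zero)]
      norm_num
      ring
    rw [hM, hstep]
    push_cast
    rw [show (k + ((d:ℤ) + 1)) = k + (d:ℤ) + 1 by ring] at *
    rw [h2]
    ring

/-! ### nestedness of dyadic cubes -/

lemma key1d {a b L : ℤ} {t c x y : ℝ} (ht : 0 < t)
    (hx1 : (a:ℝ) * t + c ≤ x) (hx2 : x < ((a:ℝ) + (L:ℝ)) * t + c)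
    (hx3 : (b:ℝ) * t + c ≤ x) (hx4 : x < ((b:ℝ) + 1) * t + c)
    (hy3 : (b:ℝ) * t + c ≤ y) (hy4 : y < ((b:ℝ) + 1) * t + c) :
    (a:ℝ) * t + c ≤ y ∧ y < ((a:ℝ) + (L:ℝ)) * t + c := by
  have hab : a ≤ b := by
    have h : (a:ℝ) * t < ((b:ℝ) + 1) * t := by linarith
    have h' : (a:ℝ) < (b:ℝ) + 1 := lt_of_mul_lt_mul_right (by linarith) ht.le
    have : a < b + 1 := by exact_mod_cast h'
    omega
  have hba : b + 1 ≤ a + L := by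
    have h : (b:ℝ) * t < ((a:ℝ) + (L:ℝ)) * t := by linarith
    have h' : (b:ℝ) < (a:ℝ) + (L:ℝ) := lt_of_mul_lt_mul_right (by linarith) ht.le
    have : b < a + L := by exact_mod_cast h'
    omega
  have h1 : (a:ℝ) * t ≤ (b:ℝ) * t := by
    have : (a:ℝ) ≤ (b:ℝ) := by exact_mod_cast hab
    exact mul_le_mul_of_nonneg_right this ht.le
  have h2 : ((b:ℝ) + 1) * t ≤ ((a:ℝ) + (L:ℝ)) * t := by
    have h' : ((b:ℝ) + 1) ≤ (a:ℝ) + (L:ℝ) := by exact_mod_cast hba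
    exact mul_le_mul_of_nonneg_right h' ht.le
  constructor <;> linarith

lemma dyCube_subset_of_le (β : BSeq N) {k k' : ℤ} (p p' : Fin N → ℤ) (hkk : k ≤ k')
    (hne : (dyCube β k' p' ∩ dyCube β k p).Nonempty) :
    dyCube β k' p' ⊆ dyCube β k p := by
  obtain ⟨x, hx', hx⟩ := hne
  intro y hy i
  have hxi := hx i
  have hx'i := hx' i
  have hyi := hy i
  dsimp only [dyCube, cube, Set.mem_setOf_eq] at hxi hx'i hyi ⊢
  set t' : ℝ := (2:ℝ) ^ (-k') with ht'def
  have ht' : 0 < t' := by positivity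
  obtain ⟨M, hM⟩ := betaShift_offset β i k (k' - k).toNat
  rw [show (k + ((k' - k).toNat : ℤ)) = k' by omega] at hM
  set L : ℤ := 2 ^ (k' - k).toNat with hLdef
  have hLt : (L : ℝ) * t' = (2:ℝ) ^ (-k) := by
    rw [hLdef, ht'def]
    push_cast
    rw [← zpow_natCast (2:ℝ) (k' - k).toNat, ← zpow_add₀ (two_ne_zero)]
    congr 1
    omega
  set c : ℝ := betaShift β k' i with hcdef
  set a : ℤ := p i * L + M with hadef
  have e1 : (p i : ℝ) * (2:ℝ) ^ (-k) + betaShift β k i = (a:ℝ) * t' + c := by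
    rw [hM, ← hLt, hadef]
    push_cast
    ring
  have e2 : (p i : ℝ) * (2:ℝ) ^ (-k) + betaShift β k i + (2:ℝ) ^ (-k)
      = ((a:ℝ) + (L:ℝ)) * t' + c := by
    rw [hM, ← hLt, hadef]
    push_cast
    ring
  have key := key1d (a := a) (b := p' i) (L := L) (t := t') (c := c) (x := x i) (y := y i) ht'
    (by linarith [hxi.1, e1]) (by linarith [hxi.2, e2])
    (by linarith [hx'i.1]) (by linarith [hx'i.2])
    (by linarith [hyi.1]) (by linarith [hyi.2])
  exact ⟨by linarith [key.1, e1], by linarith [key.2, e2]⟩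

lemma dc_nested_or_disjoint (β : BSeq N) (kp kp' : Idx N)
    (h : (dc β kp ∩ dc β kp').Nonempty) :
    dc β kp ⊆ dc β kp' ∨ dc β kp' ⊆ dc β kp := by
  obtain ⟨z, hz1, hz2⟩ := h
  rcases le_total kp'.1 kp.1 with hk | hk
  · left
    exact dyCube_subset_of_le β _ _ hk ⟨z, hz1, hz2⟩
  · right
    exact dyCube_subset_of_le β _ _ hk ⟨z, hz2, hz1⟩

lemma dc_inj (hN : N ≠ 0) (β : BSeq N) {kp kp' : Idx N} (h : dc β kp = dc β kp') :
    kp = kp' := by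
  have hv := congrArg volume h
  rw [dc, dc, volume_dyCube, volume_dyCube] at hv
  have hts : ((2:ℝ) ^ (-kp.1)) ^ N = ((2:ℝ) ^ (-kp'.1)) ^ N := by
    rw [ENNReal.ofReal_eq_ofReal_iff (by positivity) (by positivity)] at hv
    exact hv
  have hk : kp.1 = kp'.1 := by
    by_contra hne
    rcases lt_or_gt_of_ne hne with hlt | hlt
    · have h1 : (2:ℝ) ^ (-kp.1) > (2:ℝ) ^ (-kp'.1) := by
        apply zpow_lt_zpow_right₀ (by norm_num)
        omega
      have := pow_lt_pow_left₀ h1 (by positivity) hN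
      linarith [hts]
    · have h1 : (2:ℝ) ^ (-kp'.1) > (2:ℝ) ^ (-kp.1) := by
        apply zpow_lt_zpow_right₀ (by norm_num)
        omega
      have := pow_lt_pow_left₀ h1 (by positivity) hN
      linarith [hts]
  have hc : ∀ i, ((kp.2 i : ℝ)) * (2:ℝ) ^ (-kp.1) + betaShift β kp.1 i
      = ((kp'.2 i : ℝ)) * (2:ℝ) ^ (-kp'.1) + betaShift β kp'.1 i := by
    intro i
    have hmem : (fun i => ((kp.2 i : ℝ)) * (2:ℝ) ^ (-kp.1) + betaShift β kp.1 i) ∈ dc β kp' := by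
      rw [← h]; exact corner_mem_cube (by positivity)
    have hmem' : (fun i => ((kp'.2 i : ℝ)) * (2:ℝ) ^ (-kp'.1) + betaShift β kp'.1 i) ∈ dc β kp := by
      rw [h]; exact corner_mem_cube (by positivity)
    have h1 := (hmem i).1
    have h2 := (hmem' i).1
    exact le_antisymm h2 h1
  have hp : kp.2 = kp'.2 := by
    funext i
    have := hc i
    rw [hk] at this
    have h2 : ((kp.2 i : ℝ)) = ((kp'.2 i : ℝ)) := by
      have hpos : (0:ℝ) < (2:ℝ) ^ (-kp'.1) := by positivity
      have := mul_right_cancel₀ (ne_of_gt hpos) (by linarith : ((kp.2 i : ℝ)) * (2:ℝ) ^ (-kp'.1) = ((kp'.2 i : ℝ)) * (2:ℝ) ^ (-kp'.1))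
      exact this
    exact_mod_cast h2
  exact Prod.ext hk hp

end St16

namespace St16

section Stop

open Set MeasureTheory

variable {N : ℕ} (β : BSeq N) (u v : ℕ) (γ : ℝ) (w : Euc N → ℝ) (Qc : Euc N) (Ql : ℝ) (ρ a : ℤ)

lemma mem_calKa_of_stopFam {n : ℕ} {x : Idx N} (hx : x ∈ stopFam β u v γ w Qc Ql ρ a n) :
    x ∈ calKa β u v γ w Qc Ql ρ a := by
  cases n with
  | zero => exact hx.1
  | succ n => exact hx.1.1

lemma maxProp {n : ℕ} {x y : Idx N} (hx : x ∈ stopFam β u v γ w Qc Ql ρ a n)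
    (hy : y ∈ stopFam β u v γ w Qc Ql ρ a n) (hsub : dc β x ⊆ dc β y) :
    dc β y = dc β x := by
  cases n with
  | zero => exact hx.2 y hy.1 hsub
  | succ n => exact hx.2 y hy.1 hsub

lemma stop_disj (hN : N ≠ 0) {n : ℕ} {x y : Idx N} (hx : x ∈ stopFam β u v γ w Qc Ql ρ a n)
    (hy : y ∈ stopFam β u v γ w Qc Ql ρ a n) (hne : (dc β x ∩ dc β y).Nonempty) :
    x = y := by
  rcases dc_nested_or_disjoint β x y hne with h | h
  · exact dc_inj hN β (maxProp β u v γ w Qc Ql ρ a hx hy h).symm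
  · exact dc_inj hN β (maxProp β u v γ w Qc Ql ρ a hy hx h)

lemma up_step {n : ℕ} {x : Idx N} (hx : x ∈ stopFam β u v γ w Qc Ql ρ a (n + 1)) :
    ∃ T ∈ stopFam β u v γ w Qc Ql ρ a n,
      dc β x ⊂ dc β T ∧ 4 * wRatio β w Qc Ql T < wRatio β w Qc Ql x := by
  obtain ⟨T, hT, h1, h2⟩ := hx.1.2
  exact ⟨T, hT, h1, h2⟩

lemma chainUp {m j : ℕ} {x : Idx N} (hx : x ∈ stopFam β u v γ w Qc Ql ρ a (m + j)) :
    ∃ y ∈ stopFam β u v γ w Qc Ql ρ a m,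
      dc β x ⊆ dc β y ∧ (0 < j → dc β x ⊂ dc β y) := by
  induction j generalizing x with
  | zero => exact ⟨x, hx, subset_refl _, by omega⟩
  | succ j ih =>
    obtain ⟨T, hT, hxT, _⟩ := up_step β u v γ w Qc Ql ρ a hx
    obtain ⟨y, hy, hTy, _⟩ := ih hT
    exact ⟨y, hy, hxT.subset.trans hTy, fun _ => hxT.trans_le hTy⟩

lemma noLowGen (hN : N ≠ 0) {n m : ℕ} {x s : Idx N} (hnm : n < m)
    (hx : x ∈ stopFam β u v γ w Qc Ql ρ a n) (hs : s ∈ stopFam β u v γ w Qc Ql ρ a m)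
    (hsub : dc β x ⊆ dc β s) : False := by
  obtain ⟨j, rfl⟩ : ∃ j, m = n + j := ⟨m - n, by omega⟩
  obtain ⟨y, hy, hsy, hstrict⟩ := chainUp β u v γ w Qc Ql ρ a hs
  have h1 : dc β s ⊂ dc β y := hstrict (by omega)
  have hxy : x = y := by
    apply stop_disj β u v γ w Qc Ql ρ a hN hx hy
    exact (dyCube_nonempty β x.1 x.2).mono (Set.subset_inter (subset_refl _) (hsub.trans h1.subset))
  rw [← hxy] at h1
  exact (ssubset_irrefl _ (hsub.trans_lt h1)).elim

lemma stepDown (hN : N ≠ 0) {m k : ℕ} {x s : Idx N}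
    (hs : s ∈ stopFam β u v γ w Qc Ql ρ a m)
    (hx : x ∈ stopFam β u v γ w Qc Ql ρ a (m + k + 1))
    (hsub : dc β x ⊆ dc β s) :
    ∃ T ∈ stopFam β u v γ w Qc Ql ρ a (m + k),
      dc β x ⊂ dc β T ∧ dc β T ⊆ dc β s ∧ 4 * wRatio β w Qc Ql T < wRatio β w Qc Ql x := by
  obtain ⟨T, hT, hxT, hdens⟩ := up_step β u v γ w Qc Ql ρ a hx
  refine ⟨T, hT, hxT, ?_, hdens⟩
  have hne : (dc β T ∩ dc β s).Nonempty :=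
    (dyCube_nonempty β x.1 x.2).mono (Set.subset_inter hxT.subset hsub)
  rcases dc_nested_or_disjoint β T s hne with h | h
  · exact h
  · rcases Nat.eq_zero_or_pos k with rfl | hk
    · have : T = s := stop_disj β u v γ w Qc Ql ρ a hN hT hs hne
      rw [this]
    · obtain ⟨y, hy, hTy, hstrict⟩ := chainUp β u v γ w Qc Ql ρ a hT
      have h1 : dc β T ⊂ dc β y := hstrict hk
      have hys : y = s := by
        apply stop_disj β u v γ w Qc Ql ρ a hN hy hs
        exact (dyCube_nonempty β s.1 s.2).mono
          (Set.subset_inter (h.trans h1.subset) (subset_refl _))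
      rw [hys] at h1
      exact ((ssubset_irrefl _) (h.trans_lt h1)).elim

end Stop
end St16

namespace St16

section Meas

open Set MeasureTheory

variable {N : ℕ}

/-- real sidelength-volume of the cube indexed by `kp`. -/
def ell (kp : Idx N) : ℝ := ((2:ℝ) ^ (-kp.1)) ^ N

lemma ell_pos (kp : Idx N) : 0 < ell kp := by unfold ell; positivity

lemma volume_dc (β : BSeq N) (kp : Idx N) :
    volume (dc β kp) = ENNReal.ofReal (ell kp) := volume_dyCube β kp.1 kp.2

variable (β : BSeq N) (u v : ℕ) (γ : ℝ) (w : Euc N → ℝ) (Qc : Euc N) (Ql : ℝ) (ρ a : ℤ)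

lemma wRatio_pos {kp : Idx N} (hw0 : ∀ x, 0 ≤ w x)
    (hkp : kp ∈ calKa β u v γ w Qc Ql ρ a) : 0 < wRatio β w Qc Ql kp := by
  have h := hkp.2.1
  have h1 : 0 ≤ wRatio β w Qc Ql kp :=
    div_nonneg (integral_nonneg fun x => hw0 x) (by positivity)
  have h2 : 0 ≤ sigRatio β w kp :=
    div_nonneg (integral_nonneg fun x => inv_nonneg.2 (hw0 x)) (by positivity)
  have hpos : (0:ℝ) < wRatio β w Qc Ql kp * sigRatio β w kp :=
    lt_trans (by positivity) h
  rcases mul_pos_iff.1 hpos with ⟨h3, _⟩ | ⟨h3, _⟩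
  · exact h3
  · linarith

lemma integrableOn_w (hloc : LocallyIntegrable w volume) (kp : Idx N) (S : Set (Euc N))
    (hS : S ⊆ dc β kp) : IntegrableOn w S volume := by
  have hcb : dc β kp ⊆ Metric.closedBall
      (fun i => ((kp.2 i : ℝ)) * (2:ℝ) ^ (-kp.1) + betaShift β kp.1 i) ((2:ℝ) ^ (-kp.1)) :=
    cube_subset_closedBall _ (by positivity)
  exact (hloc.integrableOn_isCompact (isCompact_closedBall _ _)).mono_set (hS.trans hcb)

/-- The water-level/Carleson estimate for a disjoint family of high-density cubes
inside `T`. -/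
lemma children_sum (hN : N ≠ 0) (hwpos : ∀ x, 0 < w x) (hloc : LocallyIntegrable w volume)
    {n : ℕ} {T : Idx N} (hT : T ∈ calKa β u v γ w Qc Ql ρ a) :
    (∑' x : {kp : Idx N | kp ∈ stopFam β u v γ w Qc Ql ρ a n ∧ dc β kp ⊂ dc β T ∧
        4 * wRatio β w Qc Ql T < wRatio β w Qc Ql kp},
      volume (dc β (x : Idx N))) ≤ volume (dc β T) / 4 := by
  set Chl : Set (Idx N) := {kp : Idx N | kp ∈ stopFam β u v γ w Qc Ql ρ a n ∧ dc β kp ⊂ dc β T ∧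
        4 * wRatio β w Qc Ql T < wRatio β w Qc Ql kp} with hChl
  set rT := wRatio β w Qc Ql T with hrT
  have hrTpos : 0 < rT := wRatio_pos β u v γ w Qc Ql ρ a (fun x => (hwpos x).le) hT
  set WT := ∫ x in dyCube β T.1 T.2 ∩ cube Qc Ql, w x with hWT
  have hWTeq : WT = rT * ell T := by
    rw [hrT, wRatio, ell]
    field_simp
    exact hWT
  apply Summable.tsum_le_of_sum_le ENNReal.summable
  intro F
  -- reduce to a real statement
  have hvol : ∀ x : Chl, volume (dc β (x : Idx N)) = ENNReal.ofReal (ell (x : Idx N)) :=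
    fun x => volume_dc β _
  rw [Finset.sum_congr rfl (fun x _ => hvol x), ← ENNReal.ofReal_sum_of_nonneg
    (fun x _ => (ell_pos _).le), volume_dc β T]
  rw [show ENNReal.ofReal (ell T) / 4 = ENNReal.ofReal (ell T / 4) by
    rw [ENNReal.ofReal_div_of_pos (by norm_num)]; norm_num]
  apply ENNReal.ofReal_le_ofReal
  -- real estimate
  -- each child: ell x ≤ W x / (4 rT)
  have hW : ∀ x : Idx N, x ∈ Chl →
      ell x ≤ (∫ z in dyCube β x.1 x.2 ∩ cube Qc Ql, w z) / (4 * rT) := by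
    intro x hx
    have hrx : 4 * rT < wRatio β w Qc Ql x := hx.2.2
    have hWx : (∫ z in dyCube β x.1 x.2 ∩ cube Qc Ql, w z) = wRatio β w Qc Ql x * ell x := by
      rw [wRatio, ell]; field_simp
    rw [hWx, le_div_iff₀ (by positivity)]
    nlinarith [mul_le_mul_of_nonneg_left hrx.le (ell_pos x).le]
  -- the union of children is inside T ∩ Q with disjoint pieces
  have hdisj : ∀ x ∈ F, ∀ y ∈ F, x ≠ y →
      Disjoint (dyCube β (x:Idx N).1 (x:Idx N).2 ∩ cube Qc Ql)
        (dyCube β (y:Idx N).1 (y:Idx N).2 ∩ cube Qc Ql) := by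
    intro x _ y _ hxy
    have hne : ((x:Idx N)) ≠ ((y:Idx N)) := fun h => hxy (Subtype.ext h)
    have : Disjoint (dc β (x:Idx N)) (dc β (y:Idx N)) := by
      rw [Set.disjoint_iff_inter_eq_empty]
      by_contra hcon
      exact hne (stop_disj β u v γ w Qc Ql ρ a hN x.2.1 y.2.1
        (Set.nonempty_iff_ne_empty.2 hcon))
    exact this.mono Set.inter_subset_left Set.inter_subset_left
  have hsum_le : (∑ x ∈ F, ∫ z in dyCube β (x:Idx N).1 (x:Idx N).2 ∩ cube Qc Ql, w z) ≤ WT := by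
    rw [← integral_biUnion_finset F
      (fun x _ => ((measurableSet_dyCube β _ _).inter (measurableSet_cube _ _)))
      (fun x _ y _ hxy => hdisj x ‹_› y ‹_› hxy)
      (fun x _ => integrableOn_w β w hloc (x:Idx N) _ Set.inter_subset_left)]
    apply setIntegral_mono_set
    · exact integrableOn_w β w hloc T _ Set.inter_subset_left
    · exact Filter.Eventually.of_forall (fun z => (hwpos z).le)
    · apply HasSubset.Subset.eventuallyLE
      apply Set.iUnion₂_subset
      intro x _
      exact Set.inter_subset_inter_left _ x.2.2.1.subset
  calc (∑ x ∈ F, ell (x : Idx N))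
      ≤ ∑ x ∈ F, (∫ z in dyCube β (x:Idx N).1 (x:Idx N).2 ∩ cube Qc Ql, w z) / (4 * rT) := by
        apply Finset.sum_le_sum
        intro x _
        exact hW (x : Idx N) x.2
    _ = (∑ x ∈ F, ∫ z in dyCube β (x:Idx N).1 (x:Idx N).2 ∩ cube Qc Ql, w z) / (4 * rT) := by
        rw [Finset.sum_div]
    _ ≤ WT / (4 * rT) := by
        apply div_le_div_of_nonneg_right hsum_le (by positivity)

    _ = ell T / 4 := by
        rw [hWTeq]
        field_simp

end Meas
end St16

namespace St16

section Pack

open Set MeasureTheory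

variable {N : ℕ}

instance : MeasurableSingletonClass (Fin N → ℤ) := by
  constructor
  intro f
  have : ({f} : Set (Fin N → ℤ)) = ⋂ i, (fun g : Fin N → ℤ => g i) ⁻¹' {f i} := by
    ext g; simp [funext_iff]
  rw [this]
  exact MeasurableSet.iInter fun i => (measurable_pi_apply i) (measurableSet_singleton _)

lemma measurableSet_idx (A : Set (Idx N)) : MeasurableSet A :=
  (Set.to_countable A).measurableSet

/-- The counting-type measure `A ↦ Σ_{K ∈ A} |K|` on index pairs. -/
def muS (β : BSeq N) : Measure (Idx N) :=
  Measure.sum (fun kp : Idx N => volume (dc β kp) • Measure.dirac kp)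

lemma muS_apply (β : BSeq N) (A : Set (Idx N)) :
    muS β A = ∑' kp : Idx N, A.indicator (fun kp => volume (dc β kp)) kp := by
  rw [muS, Measure.sum_apply _ (measurableSet_idx A)]
  congr 1
  funext kp
  rw [Measure.smul_apply, Measure.dirac_apply' _ (measurableSet_idx A)]
  by_cases h : kp ∈ A <;> simp [h]

lemma muS_tsum_subtype (β : BSeq N) (A : Set (Idx N)) :
    (∑' x : A, volume (dc β (x : Idx N))) = muS β A := by
  rw [muS_apply]
  exact tsum_subtype A (fun kp => volume (dc β kp))

lemma muS_singleton (β : BSeq N) (x : Idx N) : muS β {x} = volume (dc β x) := by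
  rw [muS_apply]
  rw [tsum_eq_single x]
  · simp
  · intro y hy
    simp [Set.indicator_of_notMem, hy]

lemma muS_ne_top_vol (β : BSeq N) (kp : Idx N) : volume (dc β kp) ≠ ⊤ := by
  rw [volume_dc]; exact ENNReal.ofReal_ne_top

variable (β : BSeq N) (u v : ℕ) (γ : ℝ) (w : Euc N → ℝ) (Qc : Euc N) (Ql : ℝ) (ρ a : ℤ)

lemma N_pos_of_calK {kp : Idx N} (hkp : kp ∈ calK β u v γ Qc Ql ρ) : N ≠ 0 := by
  intro hN
  obtain ⟨x, hx1, _⟩ := hkp.1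
  have huniv : dyCube β kp.1 kp.2 = Set.univ := by
    ext y
    simp only [Set.mem_univ, iff_true, dyCube, cube, Set.mem_setOf_eq]
    intro i
    exact absurd (Fin.pos i) (by omega)
  have h2 := hx1.2
  rw [huniv, frontier_univ, Metric.infDist_empty] at h2
  have : (0:ℝ) < (2:ℝ) ^ (-(max u v : ℝ) * γ) * (2:ℝ) ^ (-kp.1) := by positivity
  linarith

/-- Statement 16(i), measure form. -/
lemma packing {s : Idx N} (hwpos : ∀ x, 0 < w x) (hloc : LocallyIntegrable w volume)
    (hs : s ∈ stopSet β u v γ w Qc Ql ρ a) :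
    muS β {kp : Idx N | kp ∈ stopSet β u v γ w Qc Ql ρ a ∧ dc β kp ⊆ dc β s}
      ≤ (4/3 : ℝ≥0∞) * volume (dc β s) := by
  obtain ⟨m, hm⟩ : ∃ m, s ∈ stopFam β u v γ w Qc Ql ρ a m := by
    obtain ⟨t, ⟨m, rfl⟩, hmem⟩ := hs
    exact ⟨m, hmem⟩
  have hN : N ≠ 0 := N_pos_of_calK β u v γ Qc Ql ρ
    (mem_calKa_of_stopFam β u v γ w Qc Ql ρ a hm).1
  set D : ℕ → Set (Idx N) := fun k =>
    {kp | kp ∈ stopFam β u v γ w Qc Ql ρ a (m + k) ∧ dc β kp ⊆ dc β s} with hD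
  -- geometric decay
  have hdecay : ∀ k, muS β (D k) ≤ (4⁻¹ : ℝ≥0∞) ^ k * volume (dc β s) := by
    intro k
    induction k with
    | zero =>
      have hsub : D 0 ⊆ {s} := by
        intro x hx
        have : x = s := stop_disj β u v γ w Qc Ql ρ a hN hx.1 hm
          ((dyCube_nonempty β x.1 x.2).mono (Set.subset_inter (subset_refl _) hx.2))
        simp [this]
      calc muS β (D 0) ≤ muS β {s} := measure_mono hsub
        _ = volume (dc β s) := muS_singleton β s
        _ = (4⁻¹ : ℝ≥0∞) ^ 0 * volume (dc β s) := by rw [pow_zero, one_mul]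
    | succ k ih =>
      have hcover : D (k+1) ⊆ ⋃ T : D k,
          {kp : Idx N | kp ∈ stopFam β u v γ w Qc Ql ρ a (m + k + 1) ∧
            dc β kp ⊂ dc β (T : Idx N) ∧
            4 * wRatio β w Qc Ql (T : Idx N) < wRatio β w Qc Ql kp} := by
        intro x hx
        have hx1 : x ∈ stopFam β u v γ w Qc Ql ρ a (m + k + 1) := hx.1
        obtain ⟨T, hT, h1, h2, h3⟩ := stepDown β u v γ w Qc Ql ρ a hN hm hx1 hx.2
        exact Set.mem_iUnion.2 ⟨⟨T, hT, h2⟩, ⟨hx1, h1, h3⟩⟩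
      calc muS β (D (k+1)) ≤ ∑' T : D k, muS β
            {kp : Idx N | kp ∈ stopFam β u v γ w Qc Ql ρ a (m + k + 1) ∧
              dc β kp ⊂ dc β (T : Idx N) ∧
              4 * wRatio β w Qc Ql (T : Idx N) < wRatio β w Qc Ql kp} :=
          le_trans (measure_mono hcover) (measure_iUnion_le _)
        _ ≤ ∑' T : D k, volume (dc β (T : Idx N)) / 4 := by
            apply ENNReal.tsum_le_tsum
            intro T
            rw [← muS_tsum_subtype]
            exact children_sum β u v γ w Qc Ql ρ a hN hwpos hloc
              (mem_calKa_of_stopFam β u v γ w Qc Ql ρ a T.2.1)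
        _ = (∑' T : D k, volume (dc β (T : Idx N))) * 4⁻¹ := by
            rw [← ENNReal.tsum_mul_right]
            exact tsum_congr fun T => div_eq_mul_inv _ _
        _ = muS β (D k) * 4⁻¹ := by rw [muS_tsum_subtype]
        _ ≤ ((4⁻¹ : ℝ≥0∞) ^ k * volume (dc β s)) * 4⁻¹ := by gcongr
        _ = (4⁻¹ : ℝ≥0∞) ^ (k+1) * volume (dc β s) := by ring
  -- covering by generations
  have hcov : {kp : Idx N | kp ∈ stopSet β u v γ w Qc Ql ρ a ∧ dc β kp ⊆ dc β s}
      ⊆ ⋃ k : ℕ, D k := by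
    rintro x ⟨hx1, hx2⟩
    obtain ⟨t, ⟨n, rfl⟩, hmem⟩ := hx1
    have hnm : ¬ n < m := fun hlt => noLowGen β u v γ w Qc Ql ρ a hN hlt hmem hm hx2
    refine Set.mem_iUnion.2 ⟨n - m, ?_⟩
    have : m + (n - m) = n := by omega
    rw [hD]
    exact ⟨by rw [this]; exact hmem, hx2⟩
  calc muS β {kp : Idx N | kp ∈ stopSet β u v γ w Qc Ql ρ a ∧ dc β kp ⊆ dc β s}
      ≤ ∑' k : ℕ, muS β (D k) := le_trans (measure_mono hcov) (measure_iUnion_le _)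
    _ ≤ ∑' k : ℕ, (4⁻¹ : ℝ≥0∞) ^ k * volume (dc β s) := ENNReal.tsum_le_tsum hdecay
    _ = (∑' k : ℕ, (4⁻¹ : ℝ≥0∞) ^ k) * volume (dc β s) := ENNReal.tsum_mul_right
    _ = (4/3 : ℝ≥0∞) * volume (dc β s) := by
        rw [ENNReal.tsum_geometric]
        congr 1
        have h1 : (1:ℝ≥0∞) - 4⁻¹ = 3 * 4⁻¹ := by
          apply ENNReal.sub_eq_of_eq_add (by simp)
          have : (3:ℝ≥0∞) * 4⁻¹ + 4⁻¹ = 4 * 4⁻¹ := by ring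
          rw [this, ENNReal.mul_inv_cancel (by norm_num) (by norm_num)]
        rw [h1, ENNReal.mul_inv (by norm_num) (by norm_num), inv_inv, div_eq_mul_inv, mul_comm]

end Pack
end St16

namespace St16

open Set MeasureTheory
open scoped ENNReal

lemma arith43 (V : ℝ≥0∞) : (4/3:ℝ≥0∞) * V = V + 3⁻¹ * V := by
  have h : (4/3:ℝ≥0∞) = 1 + 3⁻¹ := by
    rw [div_eq_mul_inv]
    have : (4:ℝ≥0∞) * 3⁻¹ = 3 * 3⁻¹ + 3⁻¹ := by ring
    rw [this, ENNReal.mul_inv_cancel (by norm_num) (by norm_num)]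
  rw [h]; ring

lemma arith_final {V aa : ℝ≥0∞} (h : aa ≤ 3⁻¹ * V) : (4/3:ℝ≥0∞) * aa + 4/3 * aa ≤ V := by
  calc (4/3:ℝ≥0∞) * aa + 4/3 * aa ≤ 4/3 * (3⁻¹ * V) + 4/3 * (3⁻¹ * V) := by gcongr
    _ = (4 * 3⁻¹ * 3⁻¹ + 4 * 3⁻¹ * 3⁻¹) * V := by rw [div_eq_mul_inv]; ring
    _ ≤ 1 * V := by
        gcongr
        have e : (4:ℝ≥0∞) * 3⁻¹ * 3⁻¹ + 4 * 3⁻¹ * 3⁻¹ = 8 * (3⁻¹ * 3⁻¹) := by ring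
        rw [e, ← ENNReal.mul_inv (by norm_num) (by norm_num),
          show (3:ℝ≥0∞) * 3 = 9 by norm_num, ← div_eq_mul_inv]
        calc (8:ℝ≥0∞)/9 ≤ 9/9 := by gcongr; norm_num
          _ = 1 := ENNReal.div_self (by norm_num) (by norm_num)
    _ = V := one_mul V

end St16

/-- the stopping cubes contained in a fixed `S ∈ 𝒮^a` have total volume
at most `(4/3)|S|`, and the `L²` norm of the sum of the indicators of the strictly
smaller stopping cubes is at most `|S|^{1/2}`. -/
theorem statement_16 (N : ℕ) (β : BSeq N) (u v : ℕ) (γ : ℝ) (hγ0 : 0 < γ)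
    (hγ2 : γ < 1/2) (w : Euc N → ℝ) (hw : IsA2Weight w) (Qc : Euc N) (Ql : ℝ)
    (hQl : 0 < Ql) (ρ : ℤ) (a : ℤ) (s : ℤ × (Fin N → ℤ))
    (hs : s ∈ stopSet β u v γ w Qc Ql ρ a) :
    (∑' s' : {kp // kp ∈ stopSet β u v γ w Qc Ql ρ a ∧
          dyCube β kp.1 kp.2 ⊆ dyCube β s.1 s.2},
        volume (dyCube β (s' : ℤ × (Fin N → ℤ)).1 (s' : ℤ × (Fin N → ℤ)).2))
      ≤ (4 / 3 : ℝ≥0∞) * volume (dyCube β s.1 s.2) ∧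
    (∫⁻ x, (∑' s' : {kp // kp ∈ stopSet β u v γ w Qc Ql ρ a ∧
          dyCube β kp.1 kp.2 ⊂ dyCube β s.1 s.2},
        (dyCube β (s' : ℤ × (Fin N → ℤ)).1 (s' : ℤ × (Fin N → ℤ)).2).indicator
          (fun _ => (1 : ℝ≥0∞)) x) ^ 2)
      ≤ volume (dyCube β s.1 s.2) := by
  classical
  open St16 in
  have hN : N ≠ 0 := by
    obtain ⟨t, ⟨m, rfl⟩, hmem⟩ := hs
    exact N_pos_of_calK β u v γ Qc Ql ρ (mem_calKa_of_stopFam β u v γ w Qc Ql ρ a hmem).1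
  have part1 : ∀ t : St16.Idx N, t ∈ stopSet β u v γ w Qc Ql ρ a →
      St16.muS β {kp : St16.Idx N | kp ∈ stopSet β u v γ w Qc Ql ρ a ∧
        St16.dc β kp ⊆ St16.dc β t} ≤ (4/3 : ℝ≥0∞) * volume (St16.dc β t) :=
    fun t ht => St16.packing β u v γ w Qc Ql ρ a hw.pos hw.locInt ht
  constructor
  · -- part (i)
    have h := part1 s hs
    calc (∑' s' : {kp // kp ∈ stopSet β u v γ w Qc Ql ρ a ∧
          dyCube β kp.1 kp.2 ⊆ dyCube β s.1 s.2},
        volume (dyCube β (s' : ℤ × (Fin N → ℤ)).1 (s' : ℤ × (Fin N → ℤ)).2))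
        = St16.muS β {kp : St16.Idx N | kp ∈ stopSet β u v γ w Qc Ql ρ a ∧
            St16.dc β kp ⊆ St16.dc β s} :=
          St16.muS_tsum_subtype β _
      _ ≤ (4/3 : ℝ≥0∞) * volume (St16.dc β s) := h
  · -- part (ii)
    set A : Set (St16.Idx N) := {kp | kp ∈ stopSet β u v γ w Qc Ql ρ a ∧
      St16.dc β kp ⊂ St16.dc β s} with hA
    -- muS A ≤ 3⁻¹ * V
    have hsA : s ∉ A := fun h => (ssubset_irrefl _ h.2).elim
    have hBeq : {kp : St16.Idx N | kp ∈ stopSet β u v γ w Qc Ql ρ a ∧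
        St16.dc β kp ⊆ St16.dc β s} = A ∪ {s} := by
      ext x
      constructor
      · rintro ⟨hx1, hx2⟩
        rcases hx2.ssubset_or_eq with h | h
        · exact Or.inl ⟨hx1, h⟩
        · exact Or.inr (St16.dc_inj hN β h)
      · rintro (⟨hx1, hx2⟩ | h)
        · exact ⟨hx1, hx2.subset⟩
        · rw [Set.mem_singleton_iff] at h
          subst h
          exact ⟨hs, subset_refl _⟩
    have hmuA : St16.muS β A ≤ 3⁻¹ * volume (St16.dc β s) := by
      have h := part1 s hs
      rw [hBeq, measure_union (Set.disjoint_singleton_right.2 hsA) (St16.measurableSet_idx _),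
        St16.muS_singleton, St16.arith43] at h
      rw [add_comm] at h
      exact (ENNReal.add_le_add_iff_left (St16.muS_ne_top_vol β s)).1 h
    -- the integrand, expanded
    have hpt : ∀ x : Euc N,
        (∑' s' : A, (St16.dc β (s' : St16.Idx N)).indicator (fun _ => (1:ℝ≥0∞)) x) ^ 2
          = ∑' i : A, ∑' j : A,
              ((St16.dc β (i : St16.Idx N)) ∩ (St16.dc β (j : St16.Idx N))).indicator
                (fun _ => (1:ℝ≥0∞)) x := by
      intro x
      rw [sq, ← ENNReal.tsum_mul_right]
      apply tsum_congr; intro i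
      rw [← ENNReal.tsum_mul_left]
      apply tsum_congr; intro j
      by_cases h1 : x ∈ St16.dc β (i : St16.Idx N) <;>
        by_cases h2 : x ∈ St16.dc β (j : St16.Idx N) <;>
        simp [Set.indicator, h1, h2, Set.mem_inter_iff]
    show (∫⁻ x, (∑' s' : A, (St16.dc β (s' : St16.Idx N)).indicator (fun _ => (1:ℝ≥0∞)) x) ^ 2)
        ≤ volume (St16.dc β s)
    calc (∫⁻ x, (∑' s' : A, (St16.dc β (s' : St16.Idx N)).indicator (fun _ => (1:ℝ≥0∞)) x) ^ 2)
        = ∑' i : A, ∑' j : A,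
            volume ((St16.dc β (i : St16.Idx N)) ∩ (St16.dc β (j : St16.Idx N))) := by
          rw [lintegral_congr hpt,
            lintegral_tsum (f := fun (i : A) (x : Euc N) => ∑' j : A,
              ((St16.dc β (i : St16.Idx N)) ∩ (St16.dc β (j : St16.Idx N))).indicator
                (fun _ => (1:ℝ≥0∞)) x)
              (fun i => (Measurable.ennreal_tsum (fun j =>
              Measurable.indicator measurable_const
                ((St16.measurableSet_dyCube β _ _).inter
                  (St16.measurableSet_dyCube β _ _)))).aemeasurable)]
          apply tsum_congr; intro i
          rw [lintegral_tsum (f := fun (j : A) (x : Euc N) =>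
              ((St16.dc β (i : St16.Idx N)) ∩ (St16.dc β (j : St16.Idx N))).indicator
                (fun _ => (1:ℝ≥0∞)) x)
            (fun j => (Measurable.indicator measurable_const
            ((St16.measurableSet_dyCube β _ _).inter
              (St16.measurableSet_dyCube β _ _))).aemeasurable)]
          apply tsum_congr; intro j
          exact lintegral_indicator_one
            ((St16.measurableSet_dyCube β _ _).inter (St16.measurableSet_dyCube β _ _))
      _ ≤ ∑' i : A, ∑' j : A,
            ((if St16.dc β (j : St16.Idx N) ⊆ St16.dc β (i : St16.Idx N)
                then volume (St16.dc β (j : St16.Idx N)) else 0)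
              + (if St16.dc β (i : St16.Idx N) ⊆ St16.dc β (j : St16.Idx N)
                then volume (St16.dc β (i : St16.Idx N)) else 0)) := by
          apply ENNReal.tsum_le_tsum; intro i
          apply ENNReal.tsum_le_tsum; intro j
          by_cases hne : ((St16.dc β (i : St16.Idx N)) ∩ (St16.dc β (j : St16.Idx N))).Nonempty
          · rcases St16.dc_nested_or_disjoint β _ _ hne with h | h
            · calc volume ((St16.dc β (i : St16.Idx N)) ∩ (St16.dc β (j : St16.Idx N)))
                  ≤ volume (St16.dc β (i : St16.Idx N)) := measure_mono Set.inter_subset_left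
                _ ≤ _ := by rw [if_pos h]; exact le_add_self
            · calc volume ((St16.dc β (i : St16.Idx N)) ∩ (St16.dc β (j : St16.Idx N)))
                  ≤ volume (St16.dc β (j : St16.Idx N)) := measure_mono Set.inter_subset_right
                _ ≤ _ := by rw [if_pos h]; exact le_self_add
          · rw [Set.not_nonempty_iff_eq_empty.1 hne, measure_empty]
            exact bot_le
      _ = (∑' i : A, ∑' j : A,
            (if St16.dc β (j : St16.Idx N) ⊆ St16.dc β (i : St16.Idx N)
                then volume (St16.dc β (j : St16.Idx N)) else 0))
          + (∑' i : A, ∑' j : A,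
            (if St16.dc β (i : St16.Idx N) ⊆ St16.dc β (j : St16.Idx N)
                then volume (St16.dc β (i : St16.Idx N)) else 0)) := by
          rw [← ENNReal.tsum_add]
          apply tsum_congr; intro i
          rw [← ENNReal.tsum_add]
      _ = (∑' i : A, ∑' j : A,
            (if St16.dc β (j : St16.Idx N) ⊆ St16.dc β (i : St16.Idx N)
                then volume (St16.dc β (j : St16.Idx N)) else 0))
          + (∑' i : A, ∑' j : A,
            (if St16.dc β (j : St16.Idx N) ⊆ St16.dc β (i : St16.Idx N)
                then volume (St16.dc β (j : St16.Idx N)) else 0)) := by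
          congr 1
          exact ENNReal.tsum_comm
      _ ≤ (4/3 : ℝ≥0∞) * St16.muS β A + (4/3 : ℝ≥0∞) * St16.muS β A := by
          have hinner : ∀ i : A, (∑' j : A,
              (if St16.dc β (j : St16.Idx N) ⊆ St16.dc β (i : St16.Idx N)
                then volume (St16.dc β (j : St16.Idx N)) else 0))
              ≤ (4/3 : ℝ≥0∞) * volume (St16.dc β (i : St16.Idx N)) := by
            intro i
            have heq : (∑' j : A,
                (if St16.dc β (j : St16.Idx N) ⊆ St16.dc β (i : St16.Idx N)
                  then volume (St16.dc β (j : St16.Idx N)) else 0))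
                = St16.muS β (A ∩ {kp | St16.dc β kp ⊆ St16.dc β (i : St16.Idx N)}) := by
              rw [tsum_subtype A (fun kp => if St16.dc β kp ⊆ St16.dc β (i : St16.Idx N)
                then volume (St16.dc β kp) else 0), St16.muS_apply]
              apply tsum_congr; intro kp
              by_cases h1 : kp ∈ A <;> by_cases h2 : St16.dc β kp ⊆ St16.dc β (i : St16.Idx N) <;>
                simp [Set.indicator, h1, h2, Set.mem_inter_iff]
            rw [heq]
            calc St16.muS β (A ∩ {kp | St16.dc β kp ⊆ St16.dc β (i : St16.Idx N)})
                ≤ St16.muS β {kp | kp ∈ stopSet β u v γ w Qc Ql ρ a ∧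
                    St16.dc β kp ⊆ St16.dc β (i : St16.Idx N)} := by
                  apply measure_mono
                  rintro kp ⟨hk1, hk2⟩
                  exact ⟨hk1.1, hk2⟩
              _ ≤ (4/3 : ℝ≥0∞) * volume (St16.dc β (i : St16.Idx N)) := part1 _ i.2.1
          have houter : (∑' i : A, ∑' j : A,
              (if St16.dc β (j : St16.Idx N) ⊆ St16.dc β (i : St16.Idx N)
                then volume (St16.dc β (j : St16.Idx N)) else 0))
              ≤ (4/3 : ℝ≥0∞) * St16.muS β A := by
            calc (∑' i : A, ∑' j : A,
                (if St16.dc β (j : St16.Idx N) ⊆ St16.dc β (i : St16.Idx N)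
                  then volume (St16.dc β (j : St16.Idx N)) else 0))
                ≤ ∑' i : A, (4/3 : ℝ≥0∞) * volume (St16.dc β (i : St16.Idx N)) :=
                  ENNReal.tsum_le_tsum hinner
              _ = (4/3 : ℝ≥0∞) * ∑' i : A, volume (St16.dc β (i : St16.Idx N)) :=
                  ENNReal.tsum_mul_left
              _ = (4/3 : ℝ≥0∞) * St16.muS β A := by rw [St16.muS_tsum_subtype]
          exact add_le_add houter houter
      _ ≤ volume (St16.dc β s) := St16.arith_final hmuA
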